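/- Let t > c be a normalized inequation with c ≥ 0 and gcd(t) = 1, and let A = A^{t>c}_{(m,n)} with m = max{q ∈ ℤ : q is small} and n = min{q ∈ ℤ : q is large}. Define the strictly decreasing sequence d_0 > d_1 > … > d_ℓ by: d_0 := ∞, d_1 := max{c+1, ||t||^−}, and, as long as d_i > ||t||^−, d_{i+1} is the smallest integer greater than ||t||^− − 1 such that for every b ∈ Σ^r there is an index j with 1 ≤ j ≤ i and both ρ·d_{i+1} + t[b] and ρ·(d_i − 1) + t[b] lie in [d_j, d_{j−1}); the sequence ends with d_ℓ = ||t||^−. Let R := {m, m+1} (the two smallest integer states, i.e., −||t||^+ − 1 and −||t||^+). Then for all states p, q of A: p ∼ q (p and q are equivalent, i.e., accept the same words) if and only if p = q, or p, q ∈ R, or p, q ∈ [d_i, d_{i−1}) for some 1 ≤ i ≤ ℓ. -/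

import Mathlib

namespace Presburger

/-- A letter of the alphabet `Σ^r`, where `Σ = {0, …, ρ-1}`. -/
abbrev Letter (ρ r : ℕ) := Fin r → Fin ρ

/-- The natural number encoded by a word over `Σ` (most significant digit first). -/
def natVal (ρ : ℕ) (w : List ℕ) : ℕ := w.foldl (fun acc b => ρ * acc + b) 0

/-- The integer encoded by a nonempty word over `Σ` (ρ's complement,
most significant digit first); the empty word gets the junk value `0`. -/
def intVal (ρ : ℕ) : List ℕ → ℤ
  | [] => 0
  | b :: u => (natVal ρ u : ℤ) - (if b = 0 then 0 else (ρ : ℤ) ^ u.length)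

/-- The tuple of natural numbers encoded track-wise by a word over `Σ^r` (as integers). -/
def natVec (ρ r : ℕ) (w : List (Letter ρ r)) : Fin r → ℤ :=
  fun i => (natVal ρ (w.map fun b => (b i : ℕ)) : ℤ)

/-- The tuple of integers encoded track-wise by a nonempty word over `Σ^r`. -/
def intVec (ρ r : ℕ) (w : List (Letter ρ r)) : Fin r → ℤ :=
  fun i => intVal ρ (w.map fun b => (b i : ℕ))

/-- A language over `Σ^r` represents a set `U ⊆ ℤ^r` if it consists exactly of the
nonempty words encoding a member of `U`. -/
def Represents (ρ r : ℕ) (L : Language (Letter ρ r)) (U : Set (Fin r → ℤ)) : Prop :=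
  ∀ w : List (Letter ρ r), w ∈ L ↔ (w ≠ [] ∧ intVec ρ r w ∈ U)

/-- A DFA represents `U ⊆ ℤ^r` if its accepted language does. -/
def DFARepresents (ρ r : ℕ) {σ : Type*} (M : DFA (Letter ρ r) σ) (U : Set (Fin r → ℤ)) : Prop :=
  Represents ρ r M.accepts U

/-- Value of the homogeneous term with coefficients `k` at the point `a`. -/
def tval {r : ℕ} (k : Fin r → ℤ) (a : Fin r → ℤ) : ℤ := ∑ i, k i * a i

/-- A homogeneous term is `0` or has all its coefficients nonzero. -/
def Homog {r : ℕ} (k : Fin r → ℤ) : Prop := k = 0 ∨ ∀ i, k i ≠ 0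

/-- `σ(b)`: componentwise `0` if the digit is `0` and `-1` otherwise. -/
def sgnLetter {ρ r : ℕ} (b : Letter ρ r) : Fin r → ℤ :=
  fun i => if (b i : ℕ) = 0 then 0 else -1

/-- The letter `b` viewed as a tuple of integers. -/
def letterInt {ρ r : ℕ} (b : Letter ρ r) : Fin r → ℤ := fun i => ((b i : ℕ) : ℤ)

/-- `‖t‖⁺`: the sum of the positive coefficients of `t`. -/
def posNorm {r : ℕ} (k : Fin r → ℤ) : ℤ := ∑ i, max (k i) 0

/-- `‖t‖⁻`: the sum of the absolute values of the negative coefficients of `t`. -/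
def negNorm {r : ℕ} (k : Fin r → ℤ) : ℤ := ∑ i, max (-k i) 0

/-- `gcd(t)`: the gcd of the absolute values of the coefficients of `t`. -/
def gcdT {r : ℕ} (k : Fin r → ℤ) : ℕ := Finset.univ.gcd fun i => (k i).natAbs

/-- The transition function `η` of the infinite-state automaton for `t`,
restricted to the integer states: `η(q, b) = ρ·q + t[b]`. -/
def etaStep (ρ : ℕ) {r : ℕ} (k : Fin r → ℤ) (q : ℤ) (b : Letter ρ r) : ℤ :=
  ρ * q + tval k (letterInt b)

/-- The transition of `η` out of the initial state: `η(q_I, b) = t[σ(b)]`. -/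
def etaInit (ρ : ℕ) {r : ℕ} (k : Fin r → ℤ) (b : Letter ρ r) : ℤ :=
  tval k (sgnLetter b)

/-- A state `q` is small (for `t ⋈ c`) if `q < min{c, -‖t‖⁺}`. -/
def IsSmall {r : ℕ} (k : Fin r → ℤ) (c q : ℤ) : Prop := q < min c (-posNorm k)

/-- A state `q` is large (for `t ⋈ c`) if `q > max{c, ‖t‖⁻}`. -/
def IsLarge {r : ℕ} (k : Fin r → ℤ) (c q : ℤ) : Prop := max c (negNorm k) < q

/-- The six relations `=, ≠, <, ≤, >, ≥` on `ℤ`. -/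
def rel6 : Set (ℤ → ℤ → Prop) :=
  {fun x y => x = y, fun x y => x ≠ y, fun x y => x < y,
   fun x y => x ≤ y, fun x y => x > y, fun x y => x ≥ y}

/-- Clamp an integer into the state set `{m, …, n}`; yields `none` (the initial state)
only in the degenerate case `m > n`, which never occurs for small `m` and large `n`. -/
noncomputable def clampSt (m n x : ℤ) : Option ↥(Finset.Icc m n) :=
  if h : max m (min n x) ∈ Finset.Icc m n then some ⟨max m (min n x), h⟩ else none

/-- The DFA `A^{t ⋈ c}_{(m,n)}` for the (in)equation `t ⋈ c`: states are
`q_I = none` together with `{m, …, n}`, transitions clamp `η` to `[m, n]`, and the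
accepting states are the integer states `q` with `q ⋈ c`. -/
noncomputable def ineqDFA (ρ : ℕ) {r : ℕ} (k : Fin r → ℤ) (m n : ℤ) (rel : ℤ → ℤ → Prop) (c : ℤ) :
    DFA (Letter ρ r) (Option ↥(Finset.Icc m n)) where
  step q b :=
    match q with
    | none => clampSt m n (etaInit ρ k b)
    | some z => clampSt m n (etaStep ρ k z.val b)
  start := none
  accept := {q | ∃ z : ↥(Finset.Icc m n), q = some z ∧ rel z.val c}

/-- Two states of a DFA are equivalent if they accept exactly the same words. -/
def stEquiv {α : Type*} {σ : Type*} (M : DFA α σ) (p q : σ) : Prop :=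
  ∀ w : List α, (M.evalFrom p w ∈ M.accept ↔ M.evalFrom q w ∈ M.accept)

end Presburger

namespace Presburger

/-- `y ∈ [d_i, d_{i-1})`, where `d_0 = ∞` (so for `i = 1` there is no upper bound). -/
def memIvl (d : ℕ → ℤ) (i : ℕ) (y : ℤ) : Prop :=
  d i ≤ y ∧ (i = 1 ∨ y < d (i - 1))

/-- The defining property of the next member `x = d_{i+1}` of the sequence:
for every letter `b` there is an index `1 ≤ j ≤ i` such that both
`ρ·x + t[b]` and `ρ·(d_i - 1) + t[b]` lie in `[d_j, d_{j-1})`. -/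
def seqStepProp (ρ : ℕ) {r : ℕ} (k : Fin r → ℤ) (d : ℕ → ℤ) (i : ℕ) (x : ℤ) : Prop :=
  ∀ b : Letter ρ r, ∃ j, 1 ≤ j ∧ j ≤ i ∧
    memIvl d j (ρ * x + tval k (letterInt b)) ∧
    memIvl d j (ρ * (d i - 1) + tval k (letterInt b))

/-! ### Auxiliary development for `stmt_4` -/

section AuxBasic
variable {r : ℕ} {k : Fin r → ℤ}

lemma posNorm_nonneg (k : Fin r → ℤ) : 0 ≤ posNorm k :=
  Finset.sum_nonneg fun _ _ => le_max_right _ _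

lemma negNorm_nonneg (k : Fin r → ℤ) : 0 ≤ negNorm k :=
  Finset.sum_nonneg fun _ _ => le_max_right _ _

lemma tval_le_box {M : ℤ} {v : Fin r → ℤ} (hv : ∀ i, 0 ≤ v i ∧ v i ≤ M) :
    tval k v ≤ M * posNorm k := by
  rw [tval, posNorm, Finset.mul_sum]
  refine Finset.sum_le_sum fun i _ => ?_
  rcases le_or_gt (k i) 0 with h | h
  · rw [max_eq_right h, mul_zero]
    exact mul_nonpos_of_nonpos_of_nonneg h (hv i).1
  · rw [max_eq_left h.le, mul_comm M]
    exact mul_le_mul_of_nonneg_left (hv i).2 h.le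

lemma tval_ge_box {M : ℤ} {v : Fin r → ℤ} (hv : ∀ i, 0 ≤ v i ∧ v i ≤ M) :
    -(M * negNorm k) ≤ tval k v := by
  rw [tval, negNorm, Finset.mul_sum, ← Finset.sum_neg_distrib]
  refine Finset.sum_le_sum fun i _ => ?_
  rcases le_or_gt 0 (k i) with h | h
  · rw [max_eq_right (by omega : -k i ≤ 0), mul_zero, neg_zero]
    exact mul_nonneg h (hv i).1
  · rw [max_eq_left (by omega : (0:ℤ) ≤ -k i)]
    nlinarith [(hv i).1, (hv i).2]

/-- exact value at the box corner maximizing `t`. -/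
lemma tval_corner (k : Fin r → ℤ) (M : ℤ) :
    tval k (fun i => if 0 < k i then M else 0) = M * posNorm k := by
  rw [tval, posNorm, Finset.mul_sum]
  refine Finset.sum_congr rfl fun i _ => ?_
  rcases lt_or_ge 0 (k i) with h | h
  · rw [if_pos h, max_eq_left h.le]; ring
  · rw [if_neg (by omega), max_eq_right h, mul_zero, mul_zero]

lemma tval_sgn_le (k : Fin r → ℤ) (b : Letter ρ r) :
    tval k (sgnLetter b) ≤ negNorm k := by
  rw [tval, negNorm]
  refine Finset.sum_le_sum fun i _ => ?_
  rw [sgnLetter]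
  rcases eq_or_ne ((b i : ℕ)) 0 with h | h
  · simp [h, le_max_right]
  · simp only [if_neg h]
    rcases le_or_gt 0 (k i) with h2 | h2
    · have := le_max_right (-k i) 0; omega
    · have := le_max_left (-k i) 0; omega

lemma tval_sgn_ge (k : Fin r → ℤ) (b : Letter ρ r) :
    -posNorm k ≤ tval k (sgnLetter b) := by
  rw [tval, posNorm, ← Finset.sum_neg_distrib]
  refine Finset.sum_le_sum fun i _ => ?_
  rw [sgnLetter]
  rcases eq_or_ne ((b i : ℕ)) 0 with h | h
  · simp only [if_pos h, mul_zero]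
    have := le_max_right (k i) 0; omega
  · simp only [if_neg h]
    rcases le_or_gt 0 (k i) with h2 | h2
    · have := le_max_left (k i) 0; omega
    · have := le_max_right (k i) 0; omega

lemma tval_linear (k : Fin r → ℤ) (A : ℤ) (b v : Fin r → ℤ) :
    tval k (fun i => A * b i + v i) = A * tval k b + tval k v := by
  simp only [tval, Finset.mul_sum, ← Finset.sum_add_distrib]
  exact Finset.sum_congr rfl fun i _ => by ring

lemma tval_zero (k : Fin r → ℤ) : tval k (fun _ => 0) = 0 := by
  simp [tval]

lemma letterInt_bounds {ρ : ℕ} (b : Letter ρ r) (i : Fin r) :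
    0 ≤ letterInt b i ∧ letterInt b i ≤ (ρ : ℤ) - 1 := by
  refine ⟨Int.ofNat_nonneg _, ?_⟩
  have := (b i).isLt
  simp only [letterInt]
  omega

/-- `P + N = Σ |k i|`, so it is at least `|k i|` for each `i`. -/
lemma abs_le_norms (k : Fin r → ℤ) (i : Fin r) : |k i| ≤ posNorm k + negNorm k := by
  have h1 : |k i| = max (k i) 0 + max (-k i) 0 := by
    rcases le_or_gt 0 (k i) with h | h
    · rw [abs_of_nonneg h, max_eq_left h, max_eq_right (by omega)]; ring
    · rw [abs_of_neg h, max_eq_right h.le, max_eq_left (by omega)]; ring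
  rw [h1, posNorm, negNorm, ← Finset.sum_add_distrib]
  exact Finset.single_le_sum (f := fun j => max (k j) 0 + max (-k j) 0)
    (fun j _ => add_nonneg (le_max_right _ _) (le_max_right _ _)) (Finset.mem_univ i)

lemma norms_pos (hgcd : gcdT k = 1) : 1 ≤ posNorm k + negNorm k := by
  by_contra h
  push_neg at h
  have hall : ∀ i, k i = 0 := by
    intro i
    have h3 := abs_le_norms k i
    have h4 := abs_nonneg (k i)
    have h5 : |k i| = 0 := by omega
    exact abs_eq_zero.mp h5
  have : gcdT k = 0 := by
    rw [gcdT]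
    apply Finset.gcd_eq_zero_iff.mpr
    intro i _
    simp [hall i]
  omega

end AuxBasic
section AuxWords
variable {ρ r : ℕ}

lemma natVal_foldl (ρ : ℕ) : ∀ (u : List ℕ) (a : ℕ),
    u.foldl (fun acc b => ρ * acc + b) a = a * ρ ^ u.length + natVal ρ u := by
  intro u
  induction u with
  | nil => intro a; simp [natVal]
  | cons x u ih =>
    intro a
    have hx : natVal ρ (x :: u) = x * ρ ^ u.length + natVal ρ u := by
      have := ih x
      simp only [natVal, List.foldl_cons] at *
      rw [show ρ * 0 + x = x by ring]
      exact this
    simp only [List.foldl_cons, List.length_cons]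
    rw [ih, hx, pow_succ]
    ring

lemma natVal_cons (ρ : ℕ) (b : ℕ) (u : List ℕ) :
    natVal ρ (b :: u) = b * ρ ^ u.length + natVal ρ u := by
  simp only [natVal, List.foldl_cons]
  rw [show ρ * 0 + b = b by ring]
  exact natVal_foldl ρ u b

lemma natVal_lt (ρ : ℕ) : ∀ u : List ℕ, (∀ x ∈ u, x < ρ) → natVal ρ u < ρ ^ u.length := by
  intro u
  induction u with
  | nil => intro _; simp [natVal]
  | cons x u ih =>
    intro h
    have hx : x < ρ := h x (by simp)
    have hu := ih fun y hy => h y (by simp [hy])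
    rw [natVal_cons, List.length_cons, pow_succ]
    calc x * ρ ^ u.length + natVal ρ u < x * ρ ^ u.length + ρ ^ u.length := by omega
    _ = (x + 1) * ρ ^ u.length := by ring
    _ ≤ ρ * ρ ^ u.length := Nat.mul_le_mul_right _ (by omega)
    _ = ρ ^ u.length * ρ := by ring

lemma natVec_nil (i : Fin r) : natVec ρ r [] i = 0 := by simp [natVec, natVal]

lemma natVec_cons (b : Letter ρ r) (w : List (Letter ρ r)) (i : Fin r) :
    natVec ρ r (b :: w) i = (ρ : ℤ) ^ w.length * letterInt b i + natVec ρ r w i := by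
  simp only [natVec, List.map_cons, letterInt]
  rw [natVal_cons]
  push_cast
  rw [List.length_map]
  ring

lemma natVec_bounds (w : List (Letter ρ r)) (hρ : 1 ≤ ρ) (i : Fin r) :
    0 ≤ natVec ρ r w i ∧ natVec ρ r w i < (ρ : ℤ) ^ w.length := by
  constructor
  · exact Int.ofNat_nonneg _
  · have h := natVal_lt ρ (w.map fun b => ((b i : ℕ))) (by
      intro x hx
      simp only [List.mem_map] at hx
      obtain ⟨b, _, rfl⟩ := hx
      exact (b i).isLt)
    rw [natVec]
    have : ((ρ : ℤ)) ^ w.length = ((ρ ^ w.length : ℕ) : ℤ) := by push_cast; ring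
    rw [this]
    exact_mod_cast (by simpa using h)

lemma exists_word (hρ : 1 ≤ ρ) : ∀ (s : ℕ) (v : Fin r → ℕ), (∀ i, v i < ρ ^ s) →
    ∃ w : List (Letter ρ r), w.length = s ∧ ∀ i, natVal ρ (w.map fun b => ((b i : ℕ))) = v i := by
  intro s
  induction s with
  | zero =>
    intro v hv
    exact ⟨[], rfl, fun i => by simpa [natVal] using (by have := hv i; rw [pow_zero] at this; omega : v i = 0).symm⟩
  | succ s ih =>
    intro v hv
    have hpow : 0 < ρ ^ s := pow_pos hρ s
    have hdig : ∀ i, v i / ρ ^ s < ρ := by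
      intro i
      rw [Nat.div_lt_iff_lt_mul hpow]
      calc v i < ρ ^ (s + 1) := hv i
      _ = ρ * ρ ^ s := by rw [pow_succ]; ring
    obtain ⟨w', hlen, hval⟩ := ih (fun i => v i % ρ ^ s) (fun i => Nat.mod_lt _ hpow)
    refine ⟨(fun i => (⟨v i / ρ ^ s, hdig i⟩ : Fin ρ)) :: w', by simp [hlen], fun i => ?_⟩
    simp only [List.map_cons]
    rw [natVal_cons, List.length_map, hlen, hval]
    rw [Nat.mul_comm]
    exact Nat.div_add_mod _ _

/-- `ℤ`-level word construction. -/
lemma exists_word_int (hρ : 1 ≤ ρ) (s : ℕ) (v : Fin r → ℤ)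
    (hv : ∀ i, 0 ≤ v i ∧ v i < (ρ : ℤ) ^ s) :
    ∃ w : List (Letter ρ r), w.length = s ∧ natVec ρ r w = v := by
  obtain ⟨w, hlen, hval⟩ := exists_word hρ s (fun i => (v i).toNat) (by
    intro i
    have h1 := (hv i).1
    have h2 := (hv i).2
    have h3 : ((ρ : ℤ)) ^ s = ((ρ ^ s : ℕ) : ℤ) := by push_cast; ring
    rw [h3] at h2
    show (v i).toNat < ρ ^ s
    omega)
  refine ⟨w, hlen, funext fun i => ?_⟩
  simp only [natVec]
  rw [hval i]
  have := (hv i).1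
  omega

end AuxWords
/-- Clamp into `[m,n]`. -/
def clampZ (m n x : ℤ) : ℤ := max m (min n x)

/-- `v` is a vector of `s`-digit base-`ρ` values. -/
def BoxP (ρ : ℕ) {r : ℕ} (s : ℕ) (v : Fin r → ℤ) : Prop :=
  ∀ i, 0 ≤ v i ∧ v i < (ρ : ℤ) ^ s

section AuxDFA
variable {ρ r : ℕ} {k : Fin r → ℤ} {c m n : ℤ}

lemma clampZ_mem (h : m ≤ n) (x : ℤ) : clampZ m n x ∈ Finset.Icc m n := by
  rw [Finset.mem_Icc, clampZ]
  constructor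
  · exact le_max_left _ _
  · exact max_le h (min_le_left _ _)

lemma clampZ_of_le (h : x ≤ m) (hmn : m ≤ n) : clampZ m n x = m := by
  rw [clampZ]
  have : min n x = x := min_eq_right (le_trans h hmn)
  rw [this]
  exact max_eq_left h

lemma clampZ_of_ge (h : n ≤ x) (hmn : m ≤ n) : clampZ m n x = n := by
  rw [clampZ, min_eq_left h]
  exact max_eq_right hmn

lemma clampZ_of_mem (h1 : m ≤ x) (h2 : x ≤ n) : clampZ m n x = x := by
  rw [clampZ, min_eq_right h2]
  exact max_eq_right h1

lemma clampSt_eq (hmn : m ≤ n) (x : ℤ) :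
    clampSt m n x = some ⟨clampZ m n x, clampZ_mem hmn x⟩ := by
  rw [clampSt, dif_pos (show max m (min n x) ∈ Finset.Icc m n from clampZ_mem hmn x)]
  rfl

variable (hm : m = -posNorm k - 1) (hNn : negNorm k < n) (hcn : c < n) (hρ : 1 ≤ ρ)

include hm hNn in
lemma m_lt_n : m < n := by
  have := posNorm_nonneg k
  have := negNorm_nonneg k
  omega

/-- Box bounds restated with `M = ρ^s - 1`. -/
lemma tval_box_pow (hρ : 1 ≤ ρ) {s : ℕ} {v : Fin r → ℤ} (hv : BoxP ρ s v) :
    -(((ρ:ℤ)^s - 1) * negNorm k) ≤ tval k v ∧ tval k v ≤ ((ρ:ℤ)^s - 1) * posNorm k := by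
  have hb : ∀ i, 0 ≤ v i ∧ v i ≤ (ρ:ℤ)^s - 1 := fun i => ⟨(hv i).1, by have := (hv i).2; omega⟩
  exact ⟨tval_ge_box hb, tval_le_box hb⟩

include hm hNn hcn hρ in
/-- Clamping commutes with the `s`-step evaluation map. -/
lemma clampZ_pow (y : ℤ) (s : ℕ) (v : Fin r → ℤ) (hv : BoxP ρ s v) :
    clampZ m n ((ρ:ℤ)^s * clampZ m n y + tval k v) = clampZ m n ((ρ:ℤ)^s * y + tval k v) := by
  have hmn : m ≤ n := (m_lt_n hm hNn).le
  have hpow : (1:ℤ) ≤ (ρ:ℤ)^s := one_le_pow₀ (by exact_mod_cast hρ)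
  have htv := tval_box_pow (k := k) hρ hv
  have hP := posNorm_nonneg k
  have hN := negNorm_nonneg k
  rcases le_or_gt y m with hy | hy
  · rw [clampZ_of_le hy hmn]
    have h1 : (ρ:ℤ)^s * m + tval k v ≤ m := by nlinarith [htv.2]
    have h2 : (ρ:ℤ)^s * y + tval k v ≤ m := by nlinarith [htv.2]
    rw [clampZ_of_le h1 hmn, clampZ_of_le h2 hmn]
  · rcases le_or_gt y n with hy2 | hy2
    · rw [clampZ_of_mem hy.le hy2]
    · rw [clampZ_of_ge hy2.le hmn]
      have h1 : n ≤ (ρ:ℤ)^s * n + tval k v := by nlinarith [htv.1]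
      have h2 : n ≤ (ρ:ℤ)^s * y + tval k v := by nlinarith [htv.1]
      rw [clampZ_of_ge h1 hmn, clampZ_of_ge h2 hmn]

include hm hNn hcn hρ in
lemma evalFrom_some : ∀ (w : List (Letter ρ r)) (z : ℤ) (hz : z ∈ Finset.Icc m n),
    (ineqDFA ρ k m n (fun x y => x > y) c).evalFrom (some ⟨z, hz⟩) w =
      some ⟨clampZ m n ((ρ:ℤ)^w.length * z + tval k (natVec ρ r w)),
            clampZ_mem (m_lt_n hm hNn).le _⟩ := by
  have hmn : m ≤ n := (m_lt_n hm hNn).le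
  intro w
  induction w with
  | nil =>
    intro z hz
    have h1 : (ρ:ℤ)^(0:ℕ) * z + tval k (natVec ρ r []) = z := by
      have : natVec ρ r [] = fun _ => 0 := funext fun i => natVec_nil i
      rw [this, tval_zero, pow_zero]
      ring
    simp only [DFA.evalFrom, List.foldl_nil, List.length_nil]
    refine congrArg some (Subtype.ext ?_)
    show z = clampZ m n _
    rw [Finset.mem_Icc] at hz
    rw [h1, clampZ_of_mem hz.1 hz.2]
  | cons b u ih =>
    intro z hz
    have hstep : (ineqDFA ρ k m n (fun x y => x > y) c).step (some ⟨z, hz⟩) b =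
        some ⟨clampZ m n ((ρ:ℤ) * z + tval k (letterInt b)), clampZ_mem hmn _⟩ := by
      show clampSt m n (etaStep ρ k z b) = _
      rw [etaStep, clampSt_eq hmn]
    have heval : (ineqDFA ρ k m n (fun x y => x > y) c).evalFrom (some ⟨z, hz⟩) (b :: u) =
        (ineqDFA ρ k m n (fun x y => x > y) c).evalFrom
          (some ⟨clampZ m n ((ρ:ℤ) * z + tval k (letterInt b)), clampZ_mem hmn _⟩) u := by
      simp only [DFA.evalFrom, List.foldl_cons, hstep]
    rw [heval, ih]
    congr 1
    apply Subtype.ext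
    show clampZ m n ((ρ:ℤ)^u.length * clampZ m n ((ρ:ℤ) * z + tval k (letterInt b)) + tval k (natVec ρ r u)) = _
    rw [clampZ_pow hm hNn hcn hρ _ _ _ (fun i => natVec_bounds u hρ i)]
    congr 1
    have hvec : tval k (natVec ρ r (b :: u)) =
        (ρ:ℤ)^u.length * tval k (letterInt b) + tval k (natVec ρ r u) := by
      have : natVec ρ r (b :: u) = fun i => (ρ:ℤ)^u.length * letterInt b i + natVec ρ r u i :=
        funext fun i => natVec_cons b u i
      rw [this, tval_linear]
    rw [hvec, List.length_cons, pow_succ]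
    ring

lemma clampZ_gt_iff (hmc : m ≤ c) (hcn : c < n) (x : ℤ) :
    (c < clampZ m n x) ↔ c < x := by
  rw [clampZ]
  constructor
  · intro h
    have : c < min n x := by
      rcases max_cases m (min n x) with ⟨h1, h2⟩ | ⟨h1, h2⟩ <;> omega
    exact lt_of_lt_of_le this (min_le_right _ _)
  · intro h
    have h1 : c < min n x := lt_min hcn h
    have := le_max_right m (min n x)
    omega

lemma mem_accept_iff (q : Option ↥(Finset.Icc m n)) :
    (q ∈ (ineqDFA ρ k m n (fun x y => x > y) c).accept) ↔
      ∃ z' : ↥(Finset.Icc m n), q = some z' ∧ c < z'.val := Iff.rfl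

include hm hNn hcn hρ in
lemma accept_iff (hc : 0 ≤ c) (w : List (Letter ρ r)) (z : ℤ) (hz : z ∈ Finset.Icc m n) :
    ((ineqDFA ρ k m n (fun x y => x > y) c).evalFrom (some ⟨z, hz⟩) w ∈
      (ineqDFA ρ k m n (fun x y => x > y) c).accept) ↔
    c < (ρ:ℤ)^w.length * z + tval k (natVec ρ r w) := by
  rw [evalFrom_some hm hNn hcn hρ, mem_accept_iff]
  have hmc : m ≤ c := by
    have := posNorm_nonneg k
    omega
  constructor
  · rintro ⟨z', hz', hrel⟩
    injection hz' with h
    rw [← h] at hrel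
    exact (clampZ_gt_iff hmc hcn _).mp hrel
  · intro h
    exact ⟨_, rfl, (clampZ_gt_iff hmc hcn _).mpr h⟩

end AuxDFA
/-- Arithmetic version of state equivalence for integer states. -/
def gEq (ρ : ℕ) {r : ℕ} (k : Fin r → ℤ) (c x y : ℤ) : Prop :=
  ∀ (s : ℕ) (v : Fin r → ℤ), BoxP ρ s v →
    (c < (ρ:ℤ)^s * x + tval k v ↔ c < (ρ:ℤ)^s * y + tval k v)

section AuxBridge
variable {ρ r : ℕ} {k : Fin r → ℤ} {c m n : ℤ}
variable (hm : m = -posNorm k - 1) (hNn : negNorm k < n) (hcn : c < n)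
  (hρ : 1 ≤ ρ) (hc : 0 ≤ c)

include hm hNn in
lemma sgn_mem (b : Letter ρ r) : tval k (sgnLetter b) ∈ Finset.Icc m n := by
  rw [Finset.mem_Icc]
  have h1 := tval_sgn_ge k b
  have h2 := tval_sgn_le k b
  omega

include hm hNn in
lemma evalFrom_none_cons (b : Letter ρ r) (u : List (Letter ρ r)) :
    (ineqDFA ρ k m n (fun x y => x > y) c).evalFrom none (b :: u) =
      (ineqDFA ρ k m n (fun x y => x > y) c).evalFrom
        (some ⟨tval k (sgnLetter b), sgn_mem hm hNn b⟩) u := by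
  have hmn : m ≤ n := (m_lt_n hm hNn).le
  have hstep : (ineqDFA ρ k m n (fun x y => x > y) c).step none b =
      some ⟨tval k (sgnLetter b), sgn_mem hm hNn b⟩ := by
    show clampSt m n (etaInit ρ k b) = _
    rw [etaInit, clampSt_eq hmn]
    refine congrArg some (Subtype.ext ?_)
    show clampZ m n _ = _
    have := sgn_mem hm hNn b (k := k)
    rw [Finset.mem_Icc] at this
    exact clampZ_of_mem this.1 this.2
  simp only [DFA.evalFrom, List.foldl_cons, hstep]

lemma none_reject_nil :
    (ineqDFA ρ k m n (fun x y => x > y) c).evalFrom none [] ∉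
      (ineqDFA ρ k m n (fun x y => x > y) c).accept := by
  simp only [DFA.evalFrom, List.foldl_nil]
  rintro ⟨z', hz', -⟩
  cases hz'

include hm hNn hcn hρ hc in
lemma accept_iff_none (b : Letter ρ r) (u : List (Letter ρ r)) :
    ((ineqDFA ρ k m n (fun x y => x > y) c).evalFrom none (b :: u) ∈
      (ineqDFA ρ k m n (fun x y => x > y) c).accept) ↔
    c < (ρ:ℤ)^u.length * tval k (sgnLetter b) + tval k (natVec ρ r u) := by
  rw [evalFrom_none_cons hm hNn, accept_iff hm hNn hcn hρ hc]

include hm hNn hcn hρ hc in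
lemma stEquiv_some_iff (zp zq : ↥(Finset.Icc m n)) :
    stEquiv (ineqDFA ρ k m n (fun x y => x > y) c) (some zp) (some zq) ↔
      gEq ρ k c zp.val zq.val := by
  constructor
  · intro hst s v hv
    obtain ⟨w, hlen, hvec⟩ := exists_word_int hρ s v fun i => hv i
    have h1 := accept_iff hm hNn hcn hρ hc w zp.val zp.2
    have h2 := accept_iff hm hNn hcn hρ hc w zq.val zq.2
    rw [hlen, hvec] at h1 h2
    rw [← h1, ← h2]
    exact hst w
  · intro hg w
    rw [accept_iff hm hNn hcn hρ hc w zp.val zp.2, accept_iff hm hNn hcn hρ hc w zq.val zq.2]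
    exact hg w.length (natVec ρ r w) fun i => natVec_bounds w hρ i

lemma stEquiv_symm {α σ : Type*} {M : DFA α σ} {p q : σ} (h : stEquiv M p q) :
    stEquiv M q p := fun w => (h w).symm

end AuxBridge
section AuxClasses
variable {ρ r : ℕ} {k : Fin r → ℤ} {c : ℤ}

/-- Dead values reject everything. -/
lemma dead_reject (hc : 0 ≤ c) (hρ : 1 ≤ ρ) {x : ℤ} (hx : x ≤ -posNorm k)
    (s : ℕ) (v : Fin r → ℤ) (hv : BoxP ρ s v) :
    ¬ c < (ρ:ℤ)^s * x + tval k v := by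
  have htv := (tval_box_pow (k := k) hρ hv).2
  have hpow : (1:ℤ) ≤ (ρ:ℤ)^s := one_le_pow₀ (by exact_mod_cast hρ)
  have hP := posNorm_nonneg k
  nlinarith

lemma gEq_dead (hc : 0 ≤ c) (hρ : 1 ≤ ρ) {x y : ℤ}
    (hx : x ≤ -posNorm k) (hy : y ≤ -posNorm k) : gEq ρ k c x y := by
  intro s v hv
  simp [dead_reject hc hρ hx s v hv, dead_reject hc hρ hy s v hv]

lemma memIvl_convex {d : ℕ → ℤ} {j : ℕ} {a b x : ℤ}
    (ha : memIvl d j a) (hb : memIvl d j b) (h1 : a ≤ x) (h2 : x ≤ b) : memIvl d j x := by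
  obtain ⟨ha1, ha2⟩ := ha
  obtain ⟨hb1, hb2⟩ := hb
  exact ⟨by omega, by rcases hb2 with h | h; exact Or.inl h; exact Or.inr (by omega)⟩

/-- Digit decomposition of a box vector. -/
lemma box_decomp (hρ : 1 ≤ ρ) (s : ℕ) (v : Fin r → ℤ) (hv : BoxP ρ (s+1) v) :
    ∃ (b : Letter ρ r) (v' : Fin r → ℤ), BoxP ρ s v' ∧
      ∀ i, v i = (ρ:ℤ)^s * letterInt b i + v' i := by
  have hpow : (0:ℤ) < (ρ:ℤ)^s := pow_pos (by exact_mod_cast hρ) s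
  have hdig : ∀ i : Fin r, 0 ≤ v i / (ρ:ℤ)^s ∧ v i / (ρ:ℤ)^s < ρ := by
    intro i
    have h1 := (hv i).1
    have h2 := (hv i).2
    have hdm := Int.mul_ediv_add_emod (v i) ((ρ:ℤ)^s)
    have hr1 := Int.emod_nonneg (v i) (ne_of_gt hpow)
    have hr2 := Int.emod_lt_of_pos (v i) hpow
    constructor
    · exact Int.ediv_nonneg h1 hpow.le
    · by_contra hq
      push_neg at hq
      rw [pow_succ] at h2
      nlinarith
  refine ⟨fun i => ⟨(v i / (ρ:ℤ)^s).toNat, by have := hdig i; omega⟩,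
          fun i => v i % (ρ:ℤ)^s, fun i => ⟨Int.emod_nonneg _ (ne_of_gt hpow),
            Int.emod_lt_of_pos _ hpow⟩, fun i => ?_⟩
  have hdm := Int.mul_ediv_add_emod (v i) ((ρ:ℤ)^s)
  have := (hdig i).1
  simp only [letterInt, Fin.val_mk]
  rw [Int.toNat_of_nonneg (hdig i).1]
  omega

variable {ℓ : ℕ} {d : ℕ → ℤ}
variable (hρ2 : 2 ≤ ρ) (hc : 0 ≤ c) (hℓ : 1 ≤ ℓ)
  (hd1 : d 1 = max (c + 1) (negNorm k))
  (hdlast : d ℓ = negNorm k)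
  (hdgt : ∀ i, 1 ≤ i → i < ℓ → negNorm k < d i)
  (hdec : ∀ i, 1 ≤ i → i < ℓ → d (i + 1) < d i)
  (hmin : ∀ i, 1 ≤ i → i < ℓ →
      negNorm k ≤ d (i + 1) ∧ seqStepProp ρ k d i (d (i + 1)) ∧
      ∀ x : ℤ, negNorm k ≤ x → seqStepProp ρ k d i x → d (i + 1) ≤ x)

include hdec in
lemma dmono : ∀ a b : ℕ, 1 ≤ a → a ≤ b → b ≤ ℓ → d b ≤ d a := by
  intro a b ha hab
  induction b, hab using Nat.le_induction with
  | base => intro _; exact le_refl _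
  | succ b hb ih =>
    intro hbl
    have h1 := hdec b (by omega) (by omega)
    have h2 := ih (by omega)
    omega

include hd1 hdgt in
lemma d1_eq (hl2 : 2 ≤ ℓ) : d 1 = c + 1 := by
  have h := hdgt 1 le_rfl (by omega)
  rw [hd1] at h ⊢
  have h2 : negNorm k < c + 1 := by
    rcases max_cases (c + 1) (negNorm k) with ⟨h1, _⟩ | ⟨h1, _⟩ <;> omega
  rw [max_eq_left (by omega)]

include hdgt hdlast in
lemma d_ge_N : ∀ i, 1 ≤ i → i ≤ ℓ → negNorm k ≤ d i := by
  intro i h1 h2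
  rcases eq_or_lt_of_le h2 with h | h
  · rw [h, hdlast]
  · exact (hdgt i h1 h).le

include hd1 in
lemma d1_ge_c : c + 1 ≤ d 1 := by rw [hd1]; exact le_max_left _ _

include hd1 in
lemma d1_ge_N : negNorm k ≤ d 1 := by rw [hd1]; exact le_max_right _ _

/-- For values above `d 1`, one more digit keeps us above `d 1`. -/
lemma step_top (hρ2 : 2 ≤ ρ) {x D : ℤ} (hN : negNorm k ≤ D) (hx : D ≤ x) (b : Letter ρ r) :
    D ≤ (ρ:ℤ) * x + tval k (letterInt b) := by
  have htb : -(((ρ:ℤ) - 1) * negNorm k) ≤ tval k (letterInt b) :=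
    tval_ge_box fun i => by
      have := letterInt_bounds b i
      exact ⟨this.1, this.2⟩
  have hρ' : (2:ℤ) ≤ (ρ:ℤ) := by exact_mod_cast hρ2
  nlinarith

include hρ2 hc hℓ hd1 hdlast hdgt hdec hmin in
/-- Values in the same interval are `g`-equivalent. -/
lemma ivl_gEq : ∀ (s : ℕ) (i : ℕ) (x y : ℤ), 1 ≤ i → i ≤ ℓ →
    memIvl d i x → memIvl d i y → ∀ v : Fin r → ℤ, BoxP ρ s v →
    (c < (ρ:ℤ)^s * x + tval k v ↔ c < (ρ:ℤ)^s * y + tval k v) := by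
  intro s
  induction s with
  | zero =>
    intro i x y hi1 hi2 hx hy v hv
    have hv0 : v = fun _ => 0 := funext fun i => by
      have h1 := (hv i).1
      have h2 := (hv i).2
      rw [pow_zero] at h2
      omega
    rw [hv0, tval_zero, pow_zero]
    rcases eq_or_lt_of_le hi1 with h1 | h1
    · -- i = 1 : both accept
      have hx1 := hx.1
      have hy1 := hy.1
      rw [← h1] at hx1 hy1
      have := d1_ge_c hd1
      constructor <;> intro <;> omega
    · -- i ≥ 2 : both reject
      have hl2 : 2 ≤ ℓ := by omega
      have hde := d1_eq hd1 hdgt hl2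
      have hxu : x < d (i - 1) := by
        rcases hx.2 with h | h
        · omega
        · exact h
      have hyu : y < d (i - 1) := by
        rcases hy.2 with h | h
        · omega
        · exact h
      have hmono : d (i - 1) ≤ d 1 := dmono hdec 1 (i - 1) le_rfl (by omega) (by omega)
      constructor <;> intro <;> omega
  | succ s ih =>
    intro i x y hi1 hi2 hx hy v hv
    obtain ⟨b, v', hv', hdecomp⟩ := box_decomp (by omega) s v hv
    have hval : ∀ t : ℤ, (ρ:ℤ)^(s+1) * t + tval k v =
        (ρ:ℤ)^s * ((ρ:ℤ) * t + tval k (letterInt b)) + tval k v' := by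
      intro t
      have : v = fun i => (ρ:ℤ)^s * letterInt b i + v' i := funext hdecomp
      rw [this, tval_linear, pow_succ]
      ring
    rw [hval x, hval y]
    rcases eq_or_lt_of_le hi1 with h1 | h1
    · -- i = 1
      rw [← h1] at hx hy
      have hdN := d1_ge_N hd1
      have hx' : memIvl d 1 ((ρ:ℤ) * x + tval k (letterInt b)) :=
        ⟨step_top hρ2 hdN hx.1 b, Or.inl rfl⟩
      have hy' : memIvl d 1 ((ρ:ℤ) * y + tval k (letterInt b)) :=
        ⟨step_top hρ2 hdN hy.1 b, Or.inl rfl⟩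
      exact ih 1 _ _ le_rfl hℓ hx' hy' v' hv'
    · -- i ≥ 2
      have hρ' : (2:ℤ) ≤ (ρ:ℤ) := by exact_mod_cast hρ2
      obtain ⟨j, hj1, hj2, hmem1, hmem2⟩ := (hmin (i - 1) (by omega) (by omega)).2.1 b
      rw [show i - 1 + 1 = i by omega] at hmem1
      have hxu : x < d (i - 1) := by rcases hx.2 with h | h; omega; exact h
      have hyu : y < d (i - 1) := by rcases hy.2 with h | h; omega; exact h
      have hx' : memIvl d j ((ρ:ℤ) * x + tval k (letterInt b)) :=
        memIvl_convex hmem1 hmem2 (by nlinarith [hx.1]) (by nlinarith)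
      have hy' : memIvl d j ((ρ:ℤ) * y + tval k (letterInt b)) :=
        memIvl_convex hmem1 hmem2 (by nlinarith [hy.1]) (by nlinarith)
      exact ih j _ _ hj1 (by omega) hx' hy' v' hv'

end AuxClasses
section AuxCover
variable {r : ℕ} {k : Fin r → ℤ}

lemma bezout_finset (k : Fin r → ℤ) (s : Finset (Fin r)) :
    ∃ u : Fin r → ℤ, ∑ i ∈ s, k i * u i = ((s.gcd fun i => (k i).natAbs : ℕ) : ℤ) := by
  classical
  induction s using Finset.induction_on with
  | empty => exact ⟨0, by simp⟩
  | @insert a s ha ih =>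
    obtain ⟨u, hu⟩ := ih
    set g : ℕ := s.gcd fun i => (k i).natAbs with hg
    have hgi : ((insert a s).gcd fun i => (k i).natAbs) = Nat.gcd (k a).natAbs g := by
      rw [Finset.gcd_insert]
      rfl
    have h2 : Int.gcd (k a) (g : ℤ) = Nat.gcd (k a).natAbs g := by
      rw [Int.gcd, Int.natAbs_natCast]
    have hb := Int.gcd_eq_gcd_ab (k a) (g : ℤ)
    rw [h2] at hb
    refine ⟨fun i => if i = a then Int.gcdA (k a) (g : ℤ) else u i * Int.gcdB (k a) (g : ℤ), ?_⟩
    rw [Finset.sum_insert ha]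
    beta_reduce
    rw [if_pos rfl, hgi]
    have hsum : ∑ i ∈ s, k i * (if i = a then Int.gcdA (k a) (g : ℤ)
        else u i * Int.gcdB (k a) (g : ℤ)) = (∑ i ∈ s, k i * u i) * Int.gcdB (k a) (g : ℤ) := by
      rw [Finset.sum_mul]
      refine Finset.sum_congr rfl fun i hi => ?_
      rw [if_neg (by rintro rfl; exact ha hi)]
      ring
    rw [hsum, hu, hb]

lemma bezout (hgcd : gcdT k = 1) : ∃ u : Fin r → ℤ, ∑ i, k i * u i = 1 := by
  obtain ⟨u, hu⟩ := bezout_finset k Finset.univ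
  rw [show (Finset.univ.gcd fun i => (k i).natAbs) = gcdT k from rfl, hgcd] at hu
  exact ⟨u, by exact_mod_cast hu⟩

lemma sum_k_eq (k : Fin r → ℤ) : ∑ i, k i = posNorm k - negNorm k := by
  rw [posNorm, negNorm, ← Finset.sum_sub_distrib]
  exact Finset.sum_congr rfl fun i _ => by
    rcases le_or_gt 0 (k i) with h | h
    · rw [max_eq_left h, max_eq_right (by omega)]; ring
    · rw [max_eq_right h.le, max_eq_left (by omega)]; ring

lemma sum_abs_eq (k : Fin r → ℤ) : ∑ i, |k i| = posNorm k + negNorm k := by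
  rw [posNorm, negNorm, ← Finset.sum_add_distrib]
  exact Finset.sum_congr rfl fun i _ => by
    rcases le_or_gt 0 (k i) with h | h
    · rw [abs_of_nonneg h, max_eq_left h, max_eq_right (by omega)]; ring
    · rw [abs_of_neg h, max_eq_right h.le, max_eq_left (by omega)]; ring

/-- Greedy staircase: sums `∑ K i * y i` with `y` in a box hit every interval
`(Z - Km, Z]`. -/
lemma greedy (K : Fin r → ℤ) (Km : ℤ) (hKm : 1 ≤ Km) (hK : ∀ i, 0 ≤ K i ∧ K i ≤ Km) :
    ∀ s : Finset (Fin r), ∀ W : ℤ, 0 ≤ W → ∀ Z : ℤ, 0 ≤ Z → Z ≤ W * ∑ i ∈ s, K i →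
    ∃ y : Fin r → ℤ, (∀ i, 0 ≤ y i ∧ y i ≤ W) ∧
      Z - Km < ∑ i ∈ s, K i * y i ∧ ∑ i ∈ s, K i * y i ≤ Z := by
  classical
  intro s
  induction s using Finset.induction_on with
  | empty =>
    intro W hW Z hZ hZle
    simp only [Finset.sum_empty] at hZle ⊢
    exact ⟨fun _ => 0, fun i => ⟨le_rfl, hW⟩, by omega, by omega⟩
  | @insert a s ha ih =>
    intro W hW Z hZ hZle
    have hsumnn : 0 ≤ ∑ i ∈ s, K i := Finset.sum_nonneg fun i _ => (hK i).1
    have hKa := hK a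
    rw [Finset.sum_insert ha] at hZle
    rcases le_or_gt Z (W * ∑ i ∈ s, K i) with h | h
    · obtain ⟨y, hy, h1, h2⟩ := ih W hW Z hZ h
      refine ⟨fun i => if i = a then 0 else y i, fun i => ?_, ?_, ?_⟩
      · rcases eq_or_ne i a with rfl | hne
        · simp [hW]
        · simp [hne, hy i]
      all_goals {
        rw [Finset.sum_insert ha]
        beta_reduce
        rw [if_pos rfl,
          Finset.sum_congr rfl (fun i hi => by beta_reduce; rw [if_neg (by rintro rfl; exact ha hi)])]
        omega }
    · have hKa1 : 1 ≤ K a := by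
        rcases le_or_gt (K a) 0 with h0 | h0
        · exfalso; nlinarith
        · omega
      rcases le_or_gt (W * K a) Z with h2 | h2
      · -- take y a = W, recurse
        obtain ⟨y, hy, hs1, hs2⟩ := ih W hW (Z - K a * W) (by nlinarith) (by nlinarith)
        refine ⟨fun i => if i = a then W else y i, fun i => ?_, ?_, ?_⟩
        · rcases eq_or_ne i a with rfl | hne
          · simp [hW]
          · simp [hne, hy i]
        all_goals {
          rw [Finset.sum_insert ha]
          beta_reduce
          rw [if_pos rfl,
            Finset.sum_congr rfl (fun i hi => by beta_reduce; rw [if_neg (by rintro rfl; exact ha hi)])]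
          omega }
      · -- single coordinate suffices
        set q := Z / K a with hq
        have hq0 : 0 ≤ q := Int.ediv_nonneg hZ (by omega)
        have hdm := Int.mul_ediv_add_emod Z (K a)
        have hr1 := Int.emod_nonneg Z (by omega : K a ≠ 0)
        have hr2 := Int.emod_lt_of_pos Z (by omega : 0 < K a)
        have hqW : q ≤ W := by nlinarith
        refine ⟨fun i => if i = a then q else 0, fun i => ?_, ?_, ?_⟩
        · rcases eq_or_ne i a with rfl | hne
          · simp [hq0, hqW]
          · simp [hne, hW]
        all_goals {
          rw [Finset.sum_insert ha]
          beta_reduce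
          rw [if_pos rfl,
            Finset.sum_congr rfl (fun i hi => by
              beta_reduce
              rw [if_neg (by rintro rfl; exact ha hi), mul_zero]),
            Finset.sum_const_zero]
          nlinarith }

lemma tval_affine (k : Fin r → ℤ) (B δ : ℤ) (x u : Fin r → ℤ) :
    tval k (fun i => B + x i + δ * u i) =
      B * (∑ i, k i) + tval k x + δ * ∑ i, k i * u i := by
  simp only [tval, Finset.mul_sum, ← Finset.sum_add_distrib]
  exact Finset.sum_congr rfl fun i _ => by ring

/-- Coverage: with `gcd(t) = 1`, every integer comfortably inside
`[-M·N, M·P]` is a value of `t` on the box `[0, M]^r`. -/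
lemma coverage (hgcd : gcdT k = 1) :
    ∃ C : ℤ, 0 ≤ C ∧ ∀ M : ℤ, 0 ≤ M → ∀ z : ℤ,
      -(M * negNorm k) + C ≤ z → z ≤ M * posNorm k - C →
      ∃ v : Fin r → ℤ, (∀ i, 0 ≤ v i ∧ v i ≤ M) ∧ tval k v = z := by
  classical
  obtain ⟨u, hu⟩ := bezout hgcd
  set P := posNorm k with hP
  set N := negNorm k with hN
  set Km : ℤ := P + N with hKm
  set Us : ℤ := ∑ i, |u i| with hUs
  set B : ℤ := Km * Us + Km with hB
  clear_value P N Km Us B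
  have hP0 : 0 ≤ P := hP ▸ posNorm_nonneg k
  have hN0 : 0 ≤ N := hN ▸ negNorm_nonneg k
  have hKm1 : 1 ≤ Km := by rw [hKm, hP, hN]; exact norms_pos hgcd
  have hUs0 : 0 ≤ Us := by rw [hUs]; exact Finset.sum_nonneg fun i _ => abs_nonneg _
  have hB0 : 0 ≤ B := by rw [hB]; positivity
  refine ⟨B * Km + Km + 1, by positivity, ?_⟩
  intro M hM z hz1 hz2
  set W : ℤ := M - 2 * B with hW
  clear_value W
  have hrange : 2 * (B * Km + Km + 1) ≤ M * Km := by rw [hKm]; nlinarith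
  have hW0 : 0 ≤ W := by rw [hW]; nlinarith
  set Z : ℤ := z - B * (P - N) + W * N with hZ
  clear_value Z
  have hZ0 : 0 ≤ Z := by rw [hZ, hW]; nlinarith
  have hZle : Z ≤ W * ∑ i, |k i| := by
    rw [hZ, sum_abs_eq k, ← hP, ← hN, hW]
    nlinarith
  obtain ⟨y, hy, hg1, hg2⟩ := greedy (fun i => |k i|) Km hKm1
    (fun i => ⟨abs_nonneg _, by rw [hKm, hP, hN]; exact abs_le_norms k i⟩)
    Finset.univ W hW0 Z hZ0 hZle
  set x : Fin r → ℤ := fun i => if 0 < k i then y i else W - y i with hx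
  clear_value x
  have hxval : tval k x = (∑ i, |k i| * y i) - W * N := by
    rw [tval, hN, negNorm, Finset.mul_sum, ← Finset.sum_sub_distrib]
    refine Finset.sum_congr rfl fun i _ => ?_
    rcases lt_trichotomy (k i) 0 with h | h | h
    · simp only [hx]
      rw [if_neg (by omega : ¬ 0 < k i), abs_of_neg h, max_eq_left (by omega)]
      ring
    · simp only [hx]
      rw [if_neg (by omega : ¬ 0 < k i), h, abs_of_nonneg le_rfl, max_eq_right (by omega)]
      ring
    · simp only [hx]
      rw [if_pos h, abs_of_pos h, max_eq_right (by omega)]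
      ring
  set δ : ℤ := Z - ∑ i, |k i| * y i with hδ
  clear_value δ
  have hδ0 : 0 ≤ δ := by omega
  have hδKm : δ < Km := by omega
  refine ⟨fun i => B + x i + δ * u i, fun i => ?_, ?_⟩
  · have hui : |u i| ≤ Us := by
      rw [hUs]
      exact Finset.single_le_sum (f := fun j => |u j|) (fun j _ => abs_nonneg _) (Finset.mem_univ i)
    have habs : -|u i| ≤ u i ∧ u i ≤ |u i| := ⟨neg_abs_le _, le_abs_self _⟩
    have hxi : 0 ≤ x i ∧ x i ≤ W := by
      rw [hx]
      beta_reduce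
      rcases lt_or_ge 0 (k i) with h | h
      · simp only [if_pos h]; exact hy i
      · rw [if_neg (show ¬ 0 < k i by omega)]
        have := hy i
        omega
    have e1 : -(δ * |u i|) ≤ δ * u i := by
      nlinarith [mul_nonneg hδ0 (by linarith [habs.1] : (0:ℤ) ≤ u i + |u i|)]
    have e2 : δ * |u i| ≤ Km * Us := mul_le_mul hδKm.le hui (abs_nonneg _) (by omega)
    have e3 : δ * u i ≤ δ * |u i| := mul_le_mul_of_nonneg_left habs.2 hδ0
    constructor
    · show 0 ≤ B + x i + δ * u i
      linarith [hxi.1]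
    · show B + x i + δ * u i ≤ M
      linarith [hxi.2]
  · rw [tval_affine, hu, sum_k_eq k, ← hP, ← hN, hxval, hδ, hZ]
    ring
end AuxCover
section AuxDist
variable {ρ r : ℕ} {k : Fin r → ℤ} {c : ℤ}

lemma gEq_symm {x y : ℤ} (h : gEq ρ k c x y) : gEq ρ k c y x :=
  fun s v hv => (h s v hv).symm

lemma exists_pow_gt (hρ2 : 2 ≤ ρ) (z : ℤ) : ∃ s : ℕ, z < (ρ:ℤ)^s := by
  refine ⟨z.toNat, lt_of_le_of_lt (Int.self_le_toNat z) ?_⟩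
  calc (z.toNat : ℤ) < (2:ℤ)^z.toNat := by exact_mod_cast (Nat.lt_two_pow_self (n := z.toNat))
  _ ≤ (ρ:ℤ)^z.toNat := pow_le_pow_left₀ (by norm_num) (by exact_mod_cast hρ2) _

lemma corner_box (hρ1 : 1 ≤ ρ) (s : ℕ) :
    BoxP ρ s (fun i : Fin r => if 0 < k i then (ρ:ℤ)^s - 1 else 0) := by
  intro i
  have hpow : (1:ℤ) ≤ (ρ:ℤ)^s := one_le_pow₀ (by exact_mod_cast hρ1)
  by_cases h : 0 < k i
  · simp only [h, if_true]
    omega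
  · simp only [h, if_false]
    omega

/-- A dead value is distinguishable from a value `≥ N`. -/
lemma notg_dead_big (hρ2 : 2 ≤ ρ) (hc : 0 ≤ c) (hgcd : gcdT k = 1) {x y : ℤ}
    (hx : x ≤ -posNorm k) (hy : negNorm k ≤ y) : ¬ gEq ρ k c x y := by
  intro hg
  obtain ⟨s, hs⟩ := exists_pow_gt hρ2 (c + 1)
  have hvbox := corner_box (ρ := ρ) (k := k) (by omega : 1 ≤ ρ) s
  have htv := tval_corner k ((ρ:ℤ)^s - 1)
  have hP0 := posNorm_nonneg k
  have hN0 := negNorm_nonneg k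
  have hPN := norms_pos hgcd
  have hyacc : c < (ρ:ℤ)^s * y + tval k (fun i => if 0 < k i then (ρ:ℤ)^s - 1 else 0) := by
    rw [htv]
    rcases le_or_gt 1 y with h | h
    · nlinarith
    · have hN : negNorm k = 0 := by omega
      have hP : 1 ≤ posNorm k := by omega
      have hy0 : 0 ≤ y := le_trans hN0 hy
      nlinarith
  have hxrej := dead_reject hc (by omega) hx s _ hvbox
  exact hxrej ((hg s _ hvbox).mpr hyacc)

/-- A strictly-mid value is distinguishable from everything else. -/
lemma notg_mid (hρ2 : 2 ≤ ρ) (hc : 0 ≤ c) (hgcd : gcdT k = 1) {x y : ℤ}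
    (hy1 : -posNorm k < y) (hy2 : y < negNorm k) (hxy : x ≠ y) : ¬ gEq ρ k c x y := by
  intro hg
  obtain ⟨C, hC0, hcov⟩ := coverage hgcd
  have hP0 := posNorm_nonneg k
  have hN0 := negNorm_nonneg k
  obtain ⟨s, hs⟩ := exists_pow_gt hρ2 (C + c + posNorm k + negNorm k + 2)
  have hpow : (1:ℤ) ≤ (ρ:ℤ)^s := one_le_pow₀ (by push_cast; omega)
  have hM0 : (0:ℤ) ≤ (ρ:ℤ)^s - 1 := by omega
  rcases hxy.lt_or_gt with hlt | hlt
  · -- x < y : use z = c + 1 - ρ^s y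
    obtain ⟨v, hvb, hvz⟩ := hcov ((ρ:ℤ)^s - 1) hM0 (c + 1 - (ρ:ℤ)^s * y)
      (by nlinarith) (by nlinarith)
    have hvbox : BoxP ρ s v := fun i => ⟨(hvb i).1, by have := (hvb i).2; omega⟩
    have hyv : c < (ρ:ℤ)^s * y + tval k v := by rw [hvz]; omega
    have hxv : ¬ c < (ρ:ℤ)^s * x + tval k v := by
      rw [hvz]
      have : (ρ:ℤ)^s * x ≤ (ρ:ℤ)^s * y - (ρ:ℤ)^s := by nlinarith
      omega
    exact hxv ((hg s v hvbox).mpr hyv)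
  · -- y < x : use z = c - ρ^s y
    obtain ⟨v, hvb, hvz⟩ := hcov ((ρ:ℤ)^s - 1) hM0 (c - (ρ:ℤ)^s * y)
      (by nlinarith) (by nlinarith)
    have hvbox : BoxP ρ s v := fun i => ⟨(hvb i).1, by have := (hvb i).2; omega⟩
    have hyv : ¬ c < (ρ:ℤ)^s * y + tval k v := by rw [hvz]; omega
    have hxv : c < (ρ:ℤ)^s * x + tval k v := by
      rw [hvz]
      have : (ρ:ℤ)^s * y + (ρ:ℤ)^s ≤ (ρ:ℤ)^s * x := by nlinarith
      omega
    exact hyv ((hg s v hvbox).mp hxv)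

/-- Lifting distinctions through a first letter. -/
lemma gEq_lift (hρ2 : 2 ≤ ρ) {x y : ℤ} (hg : gEq ρ k c x y) (b : Letter ρ r) :
    gEq ρ k c ((ρ:ℤ) * x + tval k (letterInt b)) ((ρ:ℤ) * y + tval k (letterInt b)) := by
  intro s v hv
  set v' : Fin r → ℤ := fun i => (ρ:ℤ)^s * letterInt b i + v i with hv'
  have hbox : BoxP ρ (s+1) v' := by
    intro i
    have h1 := letterInt_bounds b i
    have h2 := hv i
    have hpow : (0:ℤ) < (ρ:ℤ)^s := pow_pos (by positivity) s
    constructor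
    · simp only [hv']; nlinarith [h1.1, h2.1]
    · simp only [hv']
      rw [pow_succ]
      nlinarith [h1.2, h2.2]
  have hval : ∀ t : ℤ, (ρ:ℤ)^(s+1) * t + tval k v' =
      (ρ:ℤ)^s * ((ρ:ℤ) * t + tval k (letterInt b)) + tval k v := by
    intro t
    rw [hv', tval_linear, pow_succ]
    ring
  have := hg (s+1) v' hbox
  rw [hval x, hval y] at this
  exact this

variable {ℓ : ℕ} {d : ℕ → ℤ}
variable (hρ2 : 2 ≤ ρ) (hc : 0 ≤ c) (hℓ : 1 ≤ ℓ)
  (hd1 : d 1 = max (c + 1) (negNorm k))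
  (hdlast : d ℓ = negNorm k)
  (hdgt : ∀ i, 1 ≤ i → i < ℓ → negNorm k < d i)
  (hdec : ∀ i, 1 ≤ i → i < ℓ → d (i + 1) < d i)
  (hmin : ∀ i, 1 ≤ i → i < ℓ →
      negNorm k ≤ d (i + 1) ∧ seqStepProp ρ k d i (d (i + 1)) ∧
      ∀ x : ℤ, negNorm k ≤ x → seqStepProp ρ k d i x → d (i + 1) ≤ x)

include hℓ hdlast in
lemma exists_ivl {z : ℤ} (hz : negNorm k ≤ z) :
    ∃ i, 1 ≤ i ∧ i ≤ ℓ ∧ memIvl d i z := by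
  classical
  set S : Finset ℕ := (Finset.Icc 1 ℓ).filter fun j => d j ≤ z with hS
  have hlS : ℓ ∈ S := by
    rw [hS, Finset.mem_filter, Finset.mem_Icc]
    exact ⟨⟨hℓ, le_rfl⟩, by rw [hdlast]; exact hz⟩
  have hSne : S.Nonempty := ⟨ℓ, hlS⟩
  set i := S.min' hSne with hi
  have hiS : i ∈ S := S.min'_mem hSne
  rw [hS, Finset.mem_filter, Finset.mem_Icc] at hiS
  refine ⟨i, hiS.1.1, hiS.1.2, hiS.2, ?_⟩
  rcases eq_or_lt_of_le hiS.1.1 with h1 | h1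
  · exact Or.inl h1.symm
  · right
    by_contra hcon
    push_neg at hcon
    have : i - 1 ∈ S := by
      rw [hS, Finset.mem_filter, Finset.mem_Icc]
      exact ⟨⟨by omega, by omega⟩, hcon⟩
    have := S.min'_le _ this
    omega

include hρ2 hc hℓ hd1 hdlast hdgt hdec hmin in
/-- Values in different intervals are distinguishable. -/
lemma notg_ivl : ∀ i : ℕ, ∀ i' x y, 1 ≤ i → i < i' → i' ≤ ℓ →
    memIvl d i x → memIvl d i' y → ¬ gEq ρ k c x y := by
  intro i
  induction i using Nat.strong_induction_on with
  | _ i IH =>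
    intro i' x y hi1 hii' hi'l hx hy hg
    rcases eq_or_lt_of_le hi1 with h1 | h1
    · -- i = 1 : distinguished by the empty word
      have hl2 : 2 ≤ ℓ := by omega
      have hde : d 1 = c + 1 := d1_eq hd1 hdgt hl2
      have hxc : c + 1 ≤ x := by
        have := hx.1
        rw [← h1, hde] at this
        exact this
      have hyc : y ≤ c := by
        have hyu : y < d (i' - 1) := by
          rcases hy.2 with h | h
          · omega
          · exact h
        have hmono : d (i' - 1) ≤ d 1 := dmono hdec 1 (i' - 1) le_rfl (by omega) (by omega)
        omega
      have hbox : BoxP ρ 0 (fun _ : Fin r => 0) := fun i =>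
        ⟨le_rfl, by show (0:ℤ) < (ρ:ℤ)^0; norm_num⟩
      have := hg 0 (fun _ => 0) hbox
      rw [tval_zero, pow_zero] at this
      simp only [one_mul, add_zero] at this
      omega
    · -- i ≥ 2 : one-letter reduction
      have hN0 := negNorm_nonneg k
      have hyN : negNorm k ≤ y := by
        have := hy.1
        have := d_ge_N hdlast hdgt i' (by omega) hi'l
        omega
      have hyd : y < d i := by
        have hyu : y < d (i' - 1) := by
          rcases hy.2 with h | h
          · omega
          · exact h
        have hmono : d (i' - 1) ≤ d i := dmono hdec i (i' - 1) (by omega) (by omega) (by omega)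
        omega
      have hnostep : ¬ seqStepProp ρ k d (i - 1) y := by
        intro hstep
        have h2 := (hmin (i - 1) (by omega) (by omega)).2.2 y hyN hstep
        rw [show i - 1 + 1 = i by omega] at h2
        omega
      rw [seqStepProp] at hnostep
      push_neg at hnostep
      obtain ⟨b, hb⟩ := hnostep
      obtain ⟨j, hj1, hj2, hm1, hm2⟩ := (hmin (i - 1) (by omega) (by omega)).2.1 b
      rw [show i - 1 + 1 = i by omega] at hm1
      have hρ' : (2:ℤ) ≤ (ρ:ℤ) := by exact_mod_cast hρ2
      have hxu : x < d (i - 1) := by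
        rcases hx.2 with h | h
        · omega
        · exact h
      have hx' : memIvl d j ((ρ:ℤ) * x + tval k (letterInt b)) :=
        memIvl_convex hm1 hm2 (by nlinarith [hx.1]) (by nlinarith)
      have hyN' : negNorm k ≤ (ρ:ℤ) * y + tval k (letterInt b) :=
        step_top hρ2 le_rfl hyN b
      obtain ⟨j', hj'1, hj'2, hy'⟩ := exists_ivl hℓ hdlast hyN'
      have hjne : j' ≠ j := by
        intro he
        exact hb j hj1 (by omega) (he ▸ hy') hm2
      have hg' := gEq_lift hρ2 hg b
      rcases lt_or_gt_of_ne hjne with hlt | hlt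
      · -- j' < j ≤ i - 1 < i
        exact IH j' (by omega) j _ _ hj'1 hlt (by omega)
          hy' hx' (gEq_symm hg')
      · -- j < j'
        exact IH j (by omega) j' _ _ hj1 hlt (by omega) hx' hy' hg'

end AuxDist
section AuxSpecialLetters
variable {ρ r : ℕ} {k : Fin r → ℤ} (hρ2 : 2 ≤ ρ)

include hρ2 in
lemma tval_sgn_bstar :
    tval k (sgnLetter (fun i => if k i < 0 then (⟨1, by omega⟩ : Fin ρ)
      else (⟨0, by omega⟩ : Fin ρ))) = negNorm k := by
  rw [tval, negNorm]
  refine Finset.sum_congr rfl fun i _ => ?_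
  simp only [sgnLetter]
  by_cases h : k i < 0
  · simp only [if_pos h]
    norm_num
    omega
  · simp only [if_neg h]
    norm_num
    omega

include hρ2 in
lemma tval_sgn_bdag :
    tval k (sgnLetter (fun i => if 0 < k i then (⟨ρ - 1, by omega⟩ : Fin ρ)
      else (⟨0, by omega⟩ : Fin ρ))) = -posNorm k := by
  rw [tval, posNorm, ← Finset.sum_neg_distrib]
  refine Finset.sum_congr rfl fun i _ => ?_
  simp only [sgnLetter]
  by_cases h : 0 < k i
  · simp only [if_pos h]
    have : ρ - 1 ≠ 0 := by omega
    simp only [this, if_neg, Fin.val_mk]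
    norm_num
    omega
  · simp only [if_neg h]
    norm_num
    omega

include hρ2 in
lemma letterInt_bdag :
    letterInt (fun i => if 0 < k i then (⟨ρ - 1, by omega⟩ : Fin ρ)
      else (⟨0, by omega⟩ : Fin ρ)) = fun i : Fin r => if 0 < k i then (ρ:ℤ) - 1 else 0 := by
  funext i
  simp only [letterInt]
  by_cases h : 0 < k i
  · simp only [if_pos h, Fin.val_mk]
    omega
  · simp only [if_neg h, Fin.val_mk]
    rfl

end AuxSpecialLetters

section AuxNone
variable {ρ r : ℕ} {k : Fin r → ℤ} {c m n : ℤ}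
variable (hρ2 : 2 ≤ ρ) (hc : 0 ≤ c)
  (hm : m = -posNorm k - 1) (hNn : negNorm k < n) (hcn : c < n)

include hρ2 hc hm hNn hcn in
lemma none_vs_dead (hgcd : gcdT k = 1) (z : ℤ) (hz : z ∈ Finset.Icc m n)
    (hzd : z ≤ -posNorm k) :
    ¬ stEquiv (ineqDFA ρ k m n (fun x y => x > y) c) none (some ⟨z, hz⟩) := by
  intro hst
  have hρ1 : 1 ≤ ρ := by omega
  obtain ⟨s, hs⟩ := exists_pow_gt hρ2 (c + 1)
  have hvbox := corner_box (ρ := ρ) (k := k) hρ1 s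
  obtain ⟨u, hlen, hvec⟩ := exists_word_int hρ1 s _ hvbox
  set bstar : Letter ρ r := fun i => if k i < 0 then (⟨1, by omega⟩ : Fin ρ)
      else (⟨0, by omega⟩ : Fin ρ) with hbstar
  have h1 := (hst (bstar :: u)).mp
  rw [accept_iff_none hm hNn hcn hρ1 hc, accept_iff hm hNn hcn hρ1 hc] at h1
  have hσ : tval k (sgnLetter bstar) = negNorm k := tval_sgn_bstar hρ2
  have hP0 := posNorm_nonneg k
  have hN0 := negNorm_nonneg k
  have hPN := norms_pos hgcd
  have htv := tval_corner k ((ρ:ℤ)^s - 1)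
  have hacc : c < (ρ:ℤ)^u.length * tval k (sgnLetter bstar) + tval k (natVec ρ r u) := by
    rw [hσ, hlen, hvec, htv]
    have hpow : (1:ℤ) ≤ (ρ:ℤ)^s := one_le_pow₀ (by exact_mod_cast hρ1)
    rcases le_or_gt 1 (negNorm k) with h | h
    · nlinarith
    · have hN : negNorm k = 0 := by omega
      have hP : 1 ≤ posNorm k := by omega
      nlinarith
  have hrej := dead_reject hc hρ1 hzd (bstar :: u).length (natVec ρ r (bstar :: u))
    (fun i => natVec_bounds _ hρ1 i)
  exact hrej (h1 hacc)

include hρ2 hc hm hNn hcn in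
lemma none_vs_live (z : ℤ) (hz : z ∈ Finset.Icc m n) (hz1 : -posNorm k < z) :
    ¬ stEquiv (ineqDFA ρ k m n (fun x y => x > y) c) none (some ⟨z, hz⟩) := by
  intro hst
  have hρ1 : 1 ≤ ρ := by omega
  have hρ' : (2:ℤ) ≤ (ρ:ℤ) := by exact_mod_cast hρ2
  obtain ⟨s, hs⟩ := exists_pow_gt hρ2 (c + posNorm k)
  have hvbox := corner_box (ρ := ρ) (k := k) hρ1 s
  obtain ⟨u, hlen, hvec⟩ := exists_word_int hρ1 s _ hvbox
  set bdag : Letter ρ r := fun i => if 0 < k i then (⟨ρ - 1, by omega⟩ : Fin ρ)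
      else (⟨0, by omega⟩ : Fin ρ) with hbdag
  have h1 := (hst (bdag :: u)).mpr
  rw [accept_iff_none hm hNn hcn hρ1 hc, accept_iff hm hNn hcn hρ1 hc] at h1
  have hσ : tval k (sgnLetter bdag) = -posNorm k := tval_sgn_bdag hρ2
  have hP0 := posNorm_nonneg k
  have hN0 := negNorm_nonneg k
  have htv := tval_corner k ((ρ:ℤ)^s - 1)
  have hpow : (1:ℤ) ≤ (ρ:ℤ)^s := one_le_pow₀ (by exact_mod_cast hρ1)
  -- the value from z on `bdag :: u` is large
  have hval : tval k (natVec ρ r (bdag :: u)) =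
      (ρ:ℤ)^s * (((ρ:ℤ) - 1) * posNorm k) + ((ρ:ℤ)^s - 1) * posNorm k := by
    have hnv : natVec ρ r (bdag :: u) =
        fun i => (ρ:ℤ)^u.length * letterInt bdag i + natVec ρ r u i :=
      funext fun i => natVec_cons bdag u i
    rw [hnv, tval_linear, hlen, hvec, htv]
    congr 1
    rw [letterInt_bdag hρ2, tval_corner]
  have hacc : c < (ρ:ℤ)^(bdag :: u).length * z + tval k (natVec ρ r (bdag :: u)) := by
    rw [hval, List.length_cons, hlen, pow_succ]
    have key : 0 ≤ (ρ:ℤ)^s * (ρ:ℤ) * (z + posNorm k - 1) :=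
      mul_nonneg (by positivity) (by omega)
    nlinarith
  have hrej : ¬ c < (ρ:ℤ)^u.length * tval k (sgnLetter bdag) + tval k (natVec ρ r u) := by
    rw [hσ]
    exact dead_reject hc hρ1 le_rfl u.length (natVec ρ r u) (fun i => natVec_bounds _ hρ1 i)
  exact hrej (h1 hacc)

include hcn in
lemma none_vs_acc (z : ℤ) (hz : z ∈ Finset.Icc m n) (hzc : c < z) :
    ¬ stEquiv (ineqDFA ρ k m n (fun x y => x > y) c) none (some ⟨z, hz⟩) := by
  intro hst
  have h1 := (hst []).mpr
  refine none_reject_nil (h1 ?_)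
  exact ⟨⟨z, hz⟩, rfl, hzc⟩

end AuxNone
/-- Lemma `equivalent_states`.
For the inequation `t > c` with `c ≥ 0` and `gcd(t) = 1`, consider
`A = A^{t>c}_{(m,n)}` with `m` the maximal small and `n` the minimal large state,
and let `d_1 > … > d_ℓ` be the sequence defined in the paper
(`d_0 = ∞`, `d_1 = max{c+1, ‖t‖⁻}`, each `d_{i+1}` minimal ≥ `‖t‖⁻` with the
interval property, ending at `d_ℓ = ‖t‖⁻`), and `R = {m, m+1}`.
Then two states `p, q` of `A` are equivalent iff `p = q`, or `p, q ∈ R`, or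
`p, q ∈ [d_i, d_{i-1})` for some `1 ≤ i ≤ ℓ`. -/
theorem stmt_4 (ρ r : ℕ) (hρ : 2 ≤ ρ) (k : Fin r → ℤ) (hk : Homog k)
    (hgcd : gcdT k = 1) (c : ℤ) (hc : 0 ≤ c)
    (m n : ℤ) (hm : m = min c (-posNorm k) - 1) (hn : n = max c (negNorm k) + 1)
    (ℓ : ℕ) (hℓ : 1 ≤ ℓ) (d : ℕ → ℤ)
    (hd1 : d 1 = max (c + 1) (negNorm k))
    (hdlast : d ℓ = negNorm k)
    (hdgt : ∀ i, 1 ≤ i → i < ℓ → negNorm k < d i)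
    (hdec : ∀ i, 1 ≤ i → i < ℓ → d (i + 1) < d i)
    (hmin : ∀ i, 1 ≤ i → i < ℓ →
      negNorm k ≤ d (i + 1) ∧ seqStepProp ρ k d i (d (i + 1)) ∧
      ∀ x : ℤ, negNorm k ≤ x → seqStepProp ρ k d i x → d (i + 1) ≤ x) :
    ∀ p q : Option ↥(Finset.Icc m n),
      stEquiv (ineqDFA ρ k m n (fun x y => x > y) c) p q ↔
        (p = q ∨
         (∃ zp zq : ↥(Finset.Icc m n), p = some zp ∧ q = some zq ∧
            (zp.val = m ∨ zp.val = m + 1) ∧ (zq.val = m ∨ zq.val = m + 1)) ∨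
         (∃ i, 1 ≤ i ∧ i ≤ ℓ ∧
            ∃ zp zq : ↥(Finset.Icc m n), p = some zp ∧ q = some zq ∧
              memIvl d i zp.val ∧ memIvl d i zq.val)) := by
  have hP0 := posNorm_nonneg k
  have hN0 := negNorm_nonneg k
  have hm' : m = -posNorm k - 1 := by rw [hm, min_eq_right (by omega)]
  have hNn : negNorm k < n := by
    have := le_max_right c (negNorm k)
    omega
  have hcn : c < n := by
    have := le_max_left c (negNorm k)
    omega
  have hρ1 : 1 ≤ ρ := by omega
  intro p q
  constructor
  · intro hst
    rcases p with _ | zp <;> rcases q with _ | zq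
    · exact Or.inl rfl
    · exfalso
      rcases le_or_gt zq.val (-posNorm k) with hd | hd
      · exact none_vs_dead hρ hc hm' hNn hcn hgcd zq.val zq.2 hd hst
      · exact none_vs_live hρ hc hm' hNn hcn zq.val zq.2 hd hst
    · exfalso
      have hst' := stEquiv_symm hst
      rcases le_or_gt zp.val (-posNorm k) with hd | hd
      · exact none_vs_dead hρ hc hm' hNn hcn hgcd zp.val zp.2 hd hst'
      · exact none_vs_live hρ hc hm' hNn hcn zp.val zp.2 hd hst'
    · have hg : gEq ρ k c zp.val zq.val :=
        (stEquiv_some_iff hm' hNn hcn hρ1 hc zp zq).mp hst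
      rcases eq_or_ne zp.val zq.val with he | hne
      · exact Or.inl (congrArg some (Subtype.ext he))
      · have hzp := zp.2
        have hzq := zq.2
        rw [Finset.mem_Icc] at hzp hzq
        rcases le_or_gt zp.val (-posNorm k) with hp | hp <;>
          rcases le_or_gt zq.val (-posNorm k) with hq | hq
        · exact Or.inr (Or.inl ⟨zp, zq, rfl, rfl, by omega, by omega⟩)
        · exfalso
          rcases lt_or_ge zq.val (negNorm k) with hqm | hqN
          · exact notg_mid hρ hc hgcd hq hqm hne hg
          · exact notg_dead_big hρ hc hgcd hp hqN hg
        · exfalso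
          rcases lt_or_ge zp.val (negNorm k) with hpm | hpN
          · exact notg_mid hρ hc hgcd hp hpm hne.symm (gEq_symm hg)
          · exact notg_dead_big hρ hc hgcd hq hpN (gEq_symm hg)
        · rcases lt_or_ge zp.val (negNorm k) with hpm | hpN
          · exact absurd (gEq_symm hg) (notg_mid hρ hc hgcd hp hpm hne.symm)
          · rcases lt_or_ge zq.val (negNorm k) with hqm | hqN
            · exact absurd hg (notg_mid hρ hc hgcd hq hqm hne)
            · obtain ⟨i, hi1, hi2, hpi⟩ := exists_ivl hℓ hdlast hpN
              obtain ⟨i', hi'1, hi'2, hqi⟩ := exists_ivl hℓ hdlast hqN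
              rcases lt_trichotomy i i' with hlt | heq | hgt
              · exact absurd hg
                  (notg_ivl hρ hc hℓ hd1 hdlast hdgt hdec hmin i i' _ _ hi1 hlt hi'2 hpi hqi)
              · subst heq
                exact Or.inr (Or.inr ⟨i, hi1, hi2, zp, zq, rfl, rfl, hpi, hqi⟩)
              · exact absurd (gEq_symm hg)
                  (notg_ivl hρ hc hℓ hd1 hdlast hdgt hdec hmin i' i _ _ hi'1 hgt hi2 hqi hpi)
  · rintro (heq | ⟨zp, zq, hp, hq, hzp, hzq⟩ | ⟨i, hi1, hi2, zp, zq, hp, hq, hzp, hzq⟩)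
    · subst heq
      exact fun w => Iff.rfl
    · subst hp
      subst hq
      refine (stEquiv_some_iff hm' hNn hcn hρ1 hc zp zq).mpr (gEq_dead hc hρ1 ?_ ?_) <;> omega
    · subst hp
      subst hq
      exact (stEquiv_some_iff hm' hNn hcn hρ1 hc zp zq).mpr
        (fun s v hv => ivl_gEq hρ hc hℓ hd1 hdlast hdgt hdec hmin s i zp.val zq.val
          hi1 hi2 hzp hzq v hv)

end Presburger
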